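/- Let 𝒜 = Aℤ² be a lattice and F ∈ GL(2,ℝ). The deformed lattice F𝒜 shares a full-rank intersection lattice with 𝒜 if and only if the matrix A⁻¹FA is rational. -/

import Mathlib

open scoped Matrix

noncomputable section HomoAux

def ratSet : Subring ℝ := (algebraMap ℚ ℝ).range

lemma mem_ratSet_iff {x : ℝ} : x ∈ ratSet ↔ ∃ q : ℚ, x = (q : ℝ) := by
  constructor
  · rintro ⟨q, rfl⟩; exact ⟨q, rfl⟩
  · rintro ⟨q, rfl⟩; exact ⟨q, rfl⟩

lemma ratSet_inv {x : ℝ} (hx : x ∈ ratSet) : x⁻¹ ∈ ratSet := by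
  rw [mem_ratSet_iff] at hx ⊢
  obtain ⟨q, rfl⟩ := hx
  exact ⟨q⁻¹, by push_cast; ring⟩

lemma intCast_mem_ratSet (n : ℤ) : ((n : ℝ)) ∈ ratSet :=
  mem_ratSet_iff.mpr ⟨(n : ℚ), by push_cast; ring⟩

def MemRat (M : Matrix (Fin 2) (Fin 2) ℝ) : Prop := ∀ i j, M i j ∈ ratSet

lemma memRat_det {M : Matrix (Fin 2) (Fin 2) ℝ} (h : MemRat M) : M.det ∈ ratSet := by
  rw [Matrix.det_fin_two]
  exact sub_mem (mul_mem (h 0 0) (h 1 1)) (mul_mem (h 0 1) (h 1 0))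

lemma memRat_mul {M N : Matrix (Fin 2) (Fin 2) ℝ} (hM : MemRat M) (hN : MemRat N) :
    MemRat (M * N) := by
  intro i j
  rw [Matrix.mul_apply]
  exact sum_mem (fun k _ => mul_mem (hM i k) (hN k j))

lemma memRat_inv {M : Matrix (Fin 2) (Fin 2) ℝ} (h : MemRat M) : MemRat M⁻¹ := by
  intro i j
  rw [Matrix.inv_def, Ring.inverse_eq_inv']
  have hadj : MemRat M.adjugate := by
    rw [Matrix.adjugate_fin_two]
    intro i j
    fin_cases i <;> fin_cases j <;>
      simp only [Matrix.cons_val', Matrix.cons_val_zero, Matrix.cons_val_one, Matrix.head_cons,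
        Matrix.empty_val', Matrix.cons_val_fin_one, Matrix.head_fin_const] <;>
      first
        | exact h _ _
        | exact neg_mem (h _ _)
  exact mul_mem (ratSet_inv (memRat_det h)) (hadj i j)

lemma li_iff_det {v w : Fin 2 → ℝ} :
    LinearIndependent ℝ ![v, w] ↔ (Matrix.of ![v, w]).det ≠ 0 := by
  rw [show (Matrix.of ![v, w]).det ≠ 0 ↔ IsUnit (Matrix.of ![v, w]) from
    (isUnit_iff_ne_zero.symm.trans (Matrix.isUnit_iff_isUnit_det _).symm),
    ← Matrix.linearIndependent_rows_iff_isUnit]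
  rfl

lemma rows_mulVec (B : Matrix (Fin 2) (Fin 2) ℝ) (x y : Fin 2 → ℝ) :
    Matrix.of ![B.mulVec x, B.mulVec y] = Matrix.of ![x, y] * Bᵀ := by
  ext i j
  fin_cases i <;> fin_cases j <;>
    simp [Matrix.mul_apply, Matrix.mulVec, dotProduct, Fin.sum_univ_two, mul_comm] <;> ring

lemma int_den_dvd (q : ℚ) (n : ℤ) (h : (q.den : ℤ) ∣ n) :
    ∃ m : ℤ, (q : ℝ) * (n : ℝ) = (m : ℝ) := by
  obtain ⟨c, rfl⟩ := h
  refine ⟨q.num * c, ?_⟩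
  have hd : (q.den : ℝ) ≠ 0 := by positivity
  have hq : (q : ℝ) * (q.den : ℝ) = (q.num : ℝ) := by
    rw [Rat.cast_def]; field_simp
  push_cast
  rw [← mul_assoc, hq]

end HomoAux

def latt (M : Matrix (Fin 2) (Fin 2) ℝ) : Set (Fin 2 → ℝ) :=
  {v | ∃ z : Fin 2 → ℤ, v = M.mulVec (fun i => (z i : ℝ))}

def FullRankSet (S : Set (Fin 2 → ℝ)) : Prop :=
  ∃ v ∈ S, ∃ w ∈ S, LinearIndependent ℝ ![v, w]

def IsRatMat (T : Matrix (Fin 2) (Fin 2) ℝ) : Prop :=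
  ∀ i j, ∃ q : ℚ, T i j = (q : ℝ)

/-- Homostructure coincidence criterion: the deformed lattice `F𝒜` shares a full-rank
intersection lattice with `𝒜` iff `A⁻¹FA` is rational. -/
theorem homostructure_coincidence_criterion
    (A F : Matrix (Fin 2) (Fin 2) ℝ) (hA : IsUnit A.det) (hF : IsUnit F.det) :
    FullRankSet (latt A ∩ latt (F * A)) ↔ IsRatMat (A⁻¹ * F * A) := by
  have hAd : A.det ≠ 0 := isUnit_iff_ne_zero.mp hA
  have hFd : F.det ≠ 0 := isUnit_iff_ne_zero.mp hF
  have hAT : IsUnit Aᵀ.det := by rwa [Matrix.det_transpose]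
  constructor
  · -- forward: full rank ⇒ rational
    rintro ⟨v, ⟨⟨z1, hv1⟩, ⟨z2, hv2⟩⟩, w, ⟨⟨z3, hw1⟩, ⟨z4, hw2⟩⟩, hli⟩
    set Zr : Matrix (Fin 2) (Fin 2) ℝ :=
      Matrix.of ![(fun i => ((z1 i : ℤ) : ℝ)), (fun i => ((z3 i : ℤ) : ℝ))] with hZr
    set Wr : Matrix (Fin 2) (Fin 2) ℝ :=
      Matrix.of ![(fun i => ((z2 i : ℤ) : ℝ)), (fun i => ((z4 i : ℤ) : ℝ))] with hWr
    have h1 : Matrix.of ![v, w] = Zr * Aᵀ := by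
      rw [hv1, hw1]; exact rows_mulVec A _ _
    have h2 : Matrix.of ![v, w] = Wr * (F * A)ᵀ := by
      rw [hv2, hw2]; exact rows_mulVec (F * A) _ _
    have hdet : (Matrix.of ![v, w]).det ≠ 0 := li_iff_det.mp hli
    have hWdet : Wr.det ≠ 0 := by
      intro h0
      apply hdet
      rw [h2, Matrix.det_mul, h0, zero_mul]
    have hWu : IsUnit Wr.det := isUnit_iff_ne_zero.mpr hWdet
    -- Zr = Wr * (A⁻¹ * F * A)ᵀ
    have key : Zr = Wr * (A⁻¹ * F * A)ᵀ := by
      have e1 : Zr * Aᵀ = Wr * (Aᵀ * Fᵀ) := by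
        rw [← h1, h2, Matrix.transpose_mul]
      have e2 : (A⁻¹ * F * A)ᵀ = Aᵀ * Fᵀ * (Aᵀ)⁻¹ := by
        rw [Matrix.transpose_mul, Matrix.transpose_mul, Matrix.transpose_nonsing_inv,
          Matrix.mul_assoc]
      calc Zr = Zr * (Aᵀ * (Aᵀ)⁻¹) := by
                rw [Matrix.mul_nonsing_inv _ hAT, Matrix.mul_one]
        _ = Zr * Aᵀ * (Aᵀ)⁻¹ := by rw [Matrix.mul_assoc]
        _ = Wr * (Aᵀ * Fᵀ) * (Aᵀ)⁻¹ := by rw [e1]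
        _ = Wr * (A⁻¹ * F * A)ᵀ := by rw [e2, Matrix.mul_assoc, Matrix.mul_assoc]
    have hTt : (A⁻¹ * F * A)ᵀ = Wr⁻¹ * Zr := by
      rw [key, ← Matrix.mul_assoc, Matrix.nonsing_inv_mul _ hWu, Matrix.one_mul]
    have hZrat : MemRat Zr := by
      intro i j; fin_cases i <;> simp [hZr] <;> exact intCast_mem_ratSet _
    have hWrat : MemRat Wr := by
      intro i j; fin_cases i <;> simp [hWr] <;> exact intCast_mem_ratSet _
    intro i j
    have : (A⁻¹ * F * A) i j = (Wr⁻¹ * Zr) j i := by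
      rw [← hTt]; rfl
    rw [this]
    rw [← mem_ratSet_iff]
    exact memRat_mul (memRat_inv hWrat) hZrat j i
  · -- reverse: rational ⇒ full rank
    intro hrat
    set T : Matrix (Fin 2) (Fin 2) ℝ := A⁻¹ * F * A with hT
    choose q hq using hrat
    set N : ℕ := (q 0 0).den * (q 0 1).den * (q 1 0).den * (q 1 1).den with hN
    set d : ℤ := (N : ℤ) with hd
    have hdpos : 0 < d := by
      have h0 := (q 0 0).den_pos; have h1 := (q 0 1).den_pos
      have h2 := (q 1 0).den_pos; have h3 := (q 1 1).den_pos
      rw [hd, hN]; positivity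
    have hdvdN : ∀ i j : Fin 2, (q i j).den ∣ N := by
      intro i j
      fin_cases i <;> fin_cases j
      · exact ((dvd_mul_right _ _).mul_right _).mul_right _
      · exact ((dvd_mul_left _ _).mul_right _).mul_right _
      · exact (dvd_mul_left _ _).mul_right _
      · exact dvd_mul_left _ _
    have hdvd : ∀ i j : Fin 2, ((q i j).den : ℤ) ∣ d := fun i j =>
      Int.natCast_dvd_natCast.mpr (hdvdN i j)
    have hm : ∀ i j : Fin 2, ∃ m : ℤ, ((q i j : ℝ)) * (d : ℝ) = (m : ℝ) :=
      fun i j => int_den_dvd _ _ (hdvd i j)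
    choose m hmq using hm
    have hAT : A * T = F * A := by
      rw [hT, ← Matrix.mul_assoc, ← Matrix.mul_assoc, Matrix.mul_nonsing_inv _ hA,
        Matrix.one_mul]
    -- the two integer vectors d·e₀ and d·e₁
    set c0 : Fin 2 → ℤ := ![d, 0] with hc0
    set c1 : Fin 2 → ℤ := ![0, d] with hc1
    set v0 : Fin 2 → ℝ := (F * A).mulVec (fun i => ((c0 i : ℤ) : ℝ)) with hv0
    set v1 : Fin 2 → ℝ := (F * A).mulVec (fun i => ((c1 i : ℤ) : ℝ)) with hv1
    have hT0 : T.mulVec (fun i => ((c0 i : ℤ) : ℝ)) = fun i => ((m i 0 : ℤ) : ℝ) := by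
      funext i
      simp [Matrix.mulVec, dotProduct, Fin.sum_univ_two, hc0, hq, hmq]
    have hT1 : T.mulVec (fun i => ((c1 i : ℤ) : ℝ)) = fun i => ((m i 1 : ℤ) : ℝ) := by
      funext i
      simp [Matrix.mulVec, dotProduct, Fin.sum_univ_two, hc1, hq, hmq]
    have hmem0 : v0 ∈ latt A ∩ latt (F * A) := by
      constructor
      · refine ⟨fun i => m i 0, ?_⟩
        rw [hv0, ← hAT, ← Matrix.mulVec_mulVec, hT0]
      · exact ⟨c0, rfl⟩
    have hmem1 : v1 ∈ latt A ∩ latt (F * A) := by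
      constructor
      · refine ⟨fun i => m i 1, ?_⟩
        rw [hv1, ← hAT, ← Matrix.mulVec_mulVec, hT1]
      · exact ⟨c1, rfl⟩
    refine ⟨v0, hmem0, v1, hmem1, ?_⟩
    rw [li_iff_det, hv0, hv1, rows_mulVec, Matrix.det_mul, Matrix.det_transpose,
      Matrix.det_mul]
    have hc : (Matrix.of ![(fun i => ((c0 i : ℤ) : ℝ)), (fun i => ((c1 i : ℤ) : ℝ))]).det
        = (d : ℝ) * (d : ℝ) := by
      rw [Matrix.det_fin_two]
      simp [hc0, hc1]
    rw [hc]
    have hdne : (d : ℝ) ≠ 0 := by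
      exact_mod_cast hdpos.ne'
    exact mul_ne_zero (mul_ne_zero hdne hdne) (mul_ne_zero hFd hAd)
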